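/- For every n ≥ 1 with n ≠ 3, the monoid of strong endomorphisms of the path P_n coincides with the automorphism group of P_n, i.e. sEnd P_n = Aut P_n. -/

import Mathlib

/-- `{u,v}` is an edge of the path `P_n` (vertices `0,…,n-1` standing for `1,…,n`). -/
def pathAdj {n : ℕ} (u v : Fin n) : Prop := |((u : ℕ) : ℤ) - ((v : ℕ) : ℤ)| = 1

/-- `α` is a strong endomorphism of the path `P_n`. -/
def IsSEndo {n : ℕ} (f : Function.End (Fin n)) : Prop :=
  ∀ u v : Fin n, pathAdj u v ↔ pathAdj (f u) (f v)

lemma pathAdj_iff {n : ℕ} (u v : Fin n) :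
    pathAdj u v ↔ (u.1 + 1 = v.1 ∨ v.1 + 1 = u.1) := by
  simp only [pathAdj, abs_eq (by norm_num : (0:ℤ) ≤ 1)]
  omega

lemma nbhd_eq {n : ℕ} (hn3 : n ≠ 3) {a b : Fin n}
    (h : ∀ z : Fin n, pathAdj z a ↔ pathAdj z b) (hab : a.1 < b.1) : False := by
  have hb : b.1 < n := b.2
  -- z1 = b - 1
  have h1 := (h ⟨b.1 - 1, by omega⟩).mpr ((pathAdj_iff _ _).mpr (by simp; omega))
  rw [pathAdj_iff] at h1
  simp at h1
  have hB : b.1 = a.1 + 2 := by omega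
  have hA : a.1 = 0 := by
    by_contra hA0
    have h3 := (h ⟨a.1 - 1, by omega⟩).mp ((pathAdj_iff _ _).mpr (by simp; omega))
    rw [pathAdj_iff] at h3
    simp at h3
    omega
  have hBn : b.1 + 1 = n := by
    by_contra hBn
    have h4 := (h ⟨b.1 + 1, by omega⟩).mpr ((pathAdj_iff _ _).mpr (by simp))
    rw [pathAdj_iff] at h4
    simp at h4
    omega
  omega

/-- For `n ≠ 3`, the strong endomorphisms of `P_n` are exactly the automorphisms of
`P_n` (the bijective strong endomorphisms). -/
theorem sEnd_path_eq_aut (n : ℕ) (hn : 1 ≤ n) (hn3 : n ≠ 3) :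
    {f : Function.End (Fin n) | IsSEndo f}
      = {f : Function.End (Fin n) | Function.Bijective f ∧ IsSEndo f} := by
  ext f
  simp only [Set.mem_setOf_eq]
  constructor
  · intro hf
    refine ⟨?_, hf⟩
    refine (Finite.injective_iff_bijective (f := (f : Fin n → Fin n))).mp ?_
    intro a b hab
    have h : ∀ z : Fin n, pathAdj z a ↔ pathAdj z b := by
      intro z
      rw [hf z a, hf z b, hab]
    rcases lt_trichotomy a.1 b.1 with hlt | heq | hgt
    · exact absurd hlt (fun hlt => nbhd_eq hn3 h hlt)
    · exact Fin.ext heq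
    · exact absurd hgt (fun hgt => nbhd_eq hn3 (fun z => (h z).symm) hgt)
  · exact And.right
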